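/- Additive decomposition of Γ across a child (inductive step of Lemma 2): Let u be a vertex with children u_1,…,u_d, d ≥ 2. Let T' = T \ T_{u_d} and T'' = T \ (T_{u_1} ∪ ⋯ ∪ T_{u_{d−1}}), and let Γ, Γ', Γ'' denote Γ_ξ(u,·,·) computed in T, T', T'' respectively. Then for all k ≥ 1, l ≥ 0: Γ(k,l) = min{ Γ'(k',l') + Γ''(k'',l'') : k' + k'' = k + 1, k',k'' ≥ 1, l' + l'' = l }. -/

import Mathlib

open scoped Classical

noncomputable section

/-- A finite rooted weighted tree, encoded by a parent function. The root has an
auxiliary parent edge `e_root` of weight `0` (`parent root = root`). Edges are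
identified with their lower endpoints: the parent edge `e_v` of a vertex `v`
has weight `c v`. -/
structure RTree (V : Type) [Fintype V] [DecidableEq V] where
  root : V
  parent : V → V
  w : V → ℚ
  c : V → ℚ
  parent_root : parent root = root
  reaches_root : ∀ v : V, ∃ n : ℕ, parent^[n] v = root
  w_pos : ∀ v : V, 0 < w v
  c_pos : ∀ v : V, v ≠ root → 0 < c v
  c_root : c root = 0

namespace RTree

variable {V : Type} [Fintype V] [DecidableEq V] (T : RTree V)

/-- `v` lies in the subtree rooted at `u` (equivalently, edge `e_v ≤ e_u` in the
natural partial order induced by the root). -/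
def below (u v : V) : Prop := ∃ n : ℕ, T.parent^[n] v = u

/-- The vertex set of the subtree `T_u` (also of `T_{e_u}`). -/
def desc (u : V) : Finset V := Finset.univ.filter (fun v => T.below u v)

/-- Total vertex weight `ω(A)`. -/
def wsum (A : Finset V) : ℚ := ∑ v ∈ A, T.w v

/-- The (lower endpoints of) edges with exactly one endpoint in `A`, relative to a
ground set `W` of edges/vertices (`W = univ` gives the whole tree `T`). -/
def boundaryW (W A : Finset V) : Finset V :=
  W.filter (fun v => Xor' (v ∈ A) (T.parent v ∈ A))

/-- The edge boundary `∂A` in the whole tree. -/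
def boundary (A : Finset V) : Finset V := T.boundaryW Finset.univ A

/-- `c(∂A)` relative to ground set `W`. -/
def cutW (W A : Finset V) : ℚ := ∑ v ∈ T.boundaryW W A, T.c v

/-- `c(∂A)` in the whole tree. -/
def cut (A : Finset V) : ℚ := T.cutW Finset.univ A

/-- Vertex set of the subtree `T_u` relative to the ground set `W`. -/
def descW (W : Finset V) (u : V) : Finset V := T.desc u ∩ W

/-- `ε_ξ(e_v) = ξ·ω(T_{e_v}) + c(e_v)`. -/
def eps (ξ : ℚ) (v : V) : ℚ := ξ * T.wsum (T.desc v) + T.c v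

/-- `A` induces a connected subgraph (a subtree) of the tree: some `a ∈ A` is
reachable from every `v ∈ A` by a parent-chain staying inside `A`. -/
def connectedIn (A : Finset V) : Prop :=
  ∃ a ∈ A, ∀ v ∈ A, ∃ n : ℕ, T.parent^[n] v = a ∧ ∀ m : ℕ, m ≤ n → T.parent^[m] v ∈ A

/-- The children of a vertex. -/
def children (u : V) : Finset V :=
  Finset.univ.filter (fun v => T.parent v = u ∧ v ≠ u)

/-- `A` witnesses `μ_ξ(u,k,l) = 1` relative to ground set `W`: a connected
`k`-subpartition of `T_u` whose parts all have conductance at most `ξ`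
(boundaries computed in the ground set), with at most `l` residue vertices. -/
def muWitnessW (W : Finset V) (ξ : ℚ) (u : V) {k : ℕ} (A : Fin k → Finset V) (l : ℕ) : Prop :=
  (∀ i, (A i).Nonempty) ∧ (∀ i j, i ≠ j → Disjoint (A i) (A j)) ∧
  (∀ i, A i ⊆ T.descW W u) ∧ (∀ i, T.connectedIn (A i)) ∧
  (∀ i, T.cutW W (A i) / T.wsum (A i) ≤ ξ) ∧
  ((T.descW W u \ Finset.univ.biUnion A).card ≤ l)

/-- `μ_ξ(u,k,l) = 1` relative to ground set `W`. -/
def muW (W : Finset V) (ξ : ℚ) (u : V) (k l : ℕ) : Prop :=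
  ∃ A : Fin k → Finset V, T.muWitnessW W ξ u A l

/-- `A` witnesses `μ_ξ(u,k,l) = 1` (in the whole tree `T`). -/
def muWitness (ξ : ℚ) (u : V) {k : ℕ} (A : Fin k → Finset V) (l : ℕ) : Prop :=
  T.muWitnessW Finset.univ ξ u A l

/-- `μ_ξ(u,k,l) = 1`. -/
def mu (ξ : ℚ) (u : V) (k l : ℕ) : Prop := T.muW Finset.univ ξ u k l

/-- Membership in `𝒞_ξ(u,k,l)` relative to ground set `W`: a connected
`k`-subpartition of `T_u` with `u ∈ A₁`, residue at most `l`, and conductance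
at most `ξ` for every part other than `A₁`. -/
def inCW (W : Finset V) (ξ : ℚ) (u : V) {k : ℕ} (A : Fin k → Finset V) (l : ℕ) : Prop :=
  (∀ i, (A i).Nonempty) ∧ (∀ i j, i ≠ j → Disjoint (A i) (A j)) ∧
  (∀ i, A i ⊆ T.descW W u) ∧ (∀ i, T.connectedIn (A i)) ∧
  (∀ h : 0 < k, u ∈ A ⟨0, h⟩) ∧
  (∀ i : Fin k, i.val ≠ 0 → T.cutW W (A i) / T.wsum (A i) ≤ ξ) ∧
  ((T.descW W u \ Finset.univ.biUnion A).card ≤ l)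

/-- Membership in `𝒞_ξ(u,k,l)`. -/
def inC (ξ : ℚ) (u : V) {k : ℕ} (A : Fin k → Finset V) (l : ℕ) : Prop :=
  T.inCW Finset.univ ξ u A l

/-- `γ_ξ(𝒜) = Σ_{e ∈ ∂A₁ \ {e_u}} ε_ξ(e)` relative to ground set `W`. -/
def gammaValW (W : Finset V) (ξ : ℚ) (u : V) (A1 : Finset V) : ℚ :=
  ∑ v ∈ (T.boundaryW W A1).erase u, (ξ * T.wsum (T.descW W v) + T.c v)

/-- `γ_ξ(𝒜) = Σ_{e ∈ ∂A₁ \ {e_u}} ε_ξ(e)`. -/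
def gammaVal (ξ : ℚ) (u : V) (A1 : Finset V) : ℚ := T.gammaValW Finset.univ ξ u A1

/-- `Γ_ξ(u,k,l) = min over 𝒞_ξ(u,k,l) of γ_ξ`, with value `+∞` (`⊤` of `EReal`)
when `𝒞_ξ(u,k,l)` is empty, relative to ground set `W`. -/
def GammaW (W : Finset V) (ξ : ℚ) (u : V) (k l : ℕ) : EReal :=
  sInf {x : EReal | ∃ (h : 0 < k) (A : Fin k → Finset V),
    T.inCW W ξ u A l ∧ x = ((T.gammaValW W ξ u (A ⟨0, h⟩) : ℝ) : EReal)}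

/-- `Γ_ξ(u,k,l)`. -/
def Gamma (ξ : ℚ) (u : V) (k l : ℕ) : EReal := T.GammaW Finset.univ ξ u k l

end RTree

namespace RTree

variable {V : Type} [Fintype V] [DecidableEq V] (T : RTree V)

lemma parent_iterate_root (n : ℕ) : T.parent^[n] T.root = T.root := by
  induction n with
  | zero => rfl
  | succ n ih => rw [Function.iterate_succ_apply', ih, T.parent_root]

lemma mem_desc {u v : V} : v ∈ T.desc u ↔ T.below u v := by
  simp [desc, below]
  exact Finset.mem_filter.trans ⟨fun h => h.2, fun h => ⟨Finset.mem_univ _, h⟩⟩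

lemma mem_desc_self (u : V) : u ∈ T.desc u := by
  simp [mem_desc]; exact ⟨0, rfl⟩

lemma desc_trans {u v x : V} (h1 : v ∈ T.desc x) (h2 : x ∈ T.desc u) : v ∈ T.desc u := by
  rw [mem_desc] at *
  obtain ⟨n, hn⟩ := h1; obtain ⟨m, hm⟩ := h2
  exact ⟨m + n, by rw [Function.iterate_add_apply, hn, hm]⟩

lemma mem_desc_parent_iterate {v : V} (n : ℕ) : v ∈ T.desc (T.parent^[n] v) :=
  (T.mem_desc).2 ⟨n, rfl⟩

lemma desc_antisym {u x : V} (h1 : x ∈ T.desc u) (h2 : u ∈ T.desc x) : x = u := by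
  rw [mem_desc] at h1 h2
  obtain ⟨j, hj⟩ := h1; obtain ⟨m, hm⟩ := h2
  rcases Nat.eq_zero_or_pos (m + j) with h | h
  · obtain ⟨rfl, rfl⟩ : m = 0 ∧ j = 0 := by omega
    exact hm.symm
  · have hcyc : T.parent^[m + j] x = x := by
      rw [Function.iterate_add_apply, hj, hm]
    have hx : x = T.root := by
      obtain ⟨N, hN⟩ := T.reaches_root x
      have hmul : ∀ c : ℕ, T.parent^[c * (m + j)] x = x := by
        intro c
        induction c with
        | zero => simp
        | succ c ih => rw [Nat.succ_mul, Function.iterate_add_apply, hcyc, ih]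
      have hge : N ≤ N * (m + j) := Nat.le_mul_of_pos_right N h
      calc x = T.parent^[N * (m + j)] x := (hmul N).symm
        _ = T.parent^[N * (m + j) - N] (T.parent^[N] x) := by
            rw [← Function.iterate_add_apply]; congr 1; omega
        _ = T.root := by rw [hN, parent_iterate_root]
    subst hx
    rw [← hj, parent_iterate_root]

lemma parent_mem_desc {u v : V} (h : v ∈ T.desc u) (hne : v ≠ u) :
    T.parent v ∈ T.desc u := by
  rw [mem_desc] at h ⊢
  obtain ⟨n, hn⟩ := h
  cases n with
  | zero => exact absurd hn hne
  | succ n => exact ⟨n, by rw [← Function.iterate_succ_apply]; exact hn⟩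

lemma mem_desc_of_parent {u v : V} (h : T.parent v ∈ T.desc u) : v ∈ T.desc u :=
  T.desc_trans (T.mem_desc_parent_iterate 1) h

lemma desc_nested_of_inter {v x : V} (h : (T.desc v ∩ T.desc x).Nonempty) :
    v ∈ T.desc x ∨ x ∈ T.desc v := by
  obtain ⟨w, hw⟩ := h
  rw [Finset.mem_inter, mem_desc, mem_desc] at hw
  obtain ⟨⟨a, ha⟩, ⟨b, hb⟩⟩ := hw
  rcases le_total a b with h | h
  · left
    rw [mem_desc]
    refine ⟨b - a, ?_⟩
    rw [← ha, ← Function.iterate_add_apply, ← hb]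
    congr 1; omega
  · right
    rw [mem_desc]
    refine ⟨a - b, ?_⟩
    rw [← hb, ← Function.iterate_add_apply, ← ha]
    congr 1; omega

end RTree
namespace RTree

variable {V : Type} [Fintype V] [DecidableEq V] (T : RTree V) {u ud : V}

lemma children_parent (h : ud ∈ T.children u) : T.parent ud = u := by
  simp [children] at h; exact h.1

lemma children_ne (h : ud ∈ T.children u) : ud ≠ u := by
  simp [children] at h; exact h.2

lemma children_mem_desc (h : ud ∈ T.children u) : ud ∈ T.desc u := by
  rw [mem_desc]
  exact ⟨1, by simpa using T.children_parent h⟩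

lemma desc_child_subset (h : ud ∈ T.children u) : T.desc ud ⊆ T.desc u :=
  fun v hv => T.desc_trans hv (T.children_mem_desc h)

lemma not_mem_desc_child (h : ud ∈ T.children u) : u ∉ T.desc ud := by
  intro hu
  exact T.children_ne h (T.desc_antisym (T.children_mem_desc h) hu)

/-- elements of `desc ud` other than `ud` have parent in `desc ud` -/
lemma parent_mem_desc_child {v : V} (h : ud ∈ T.children u) (hv : v ∈ T.desc ud) :
    T.parent v ∈ T.desc ud ∨ (v = ud ∧ T.parent v = u) := by
  by_cases hne : v = ud
  · right; exact ⟨hne, by rw [hne]; exact T.children_parent h⟩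
  · left; exact T.parent_mem_desc hv hne

/-- iterates of chain inside `desc u` starting from `v ∈ desc ud` stay in `{u} ∪ desc ud` -/
lemma chain_mem_union {v : V} (h : ud ∈ T.children u) (hv : v ∈ T.desc ud) (m : ℕ)
    (hm : T.parent^[m] v ∈ T.desc u) : T.parent^[m] v = u ∨ T.parent^[m] v ∈ T.desc ud := by
  by_cases hc : T.parent^[m] v ∈ T.desc ud
  · right; exact hc
  · left
    -- v ∈ desc ud, and (parent^[m] v) is an ancestor of v not in desc ud, but in desc u
    -- ancestor: v ∈ desc (parent^[m] v), so desc(parent^[m] v) ∩ desc ud ∋ v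
    have hmem : v ∈ T.desc (T.parent^[m] v) ∩ T.desc ud :=
      Finset.mem_inter.2 ⟨T.mem_desc_parent_iterate m, hv⟩
    rcases T.desc_nested_of_inter ⟨v, hmem⟩ with h1 | h1
    · exact absurd h1 hc
    · -- ud ∈ desc (parent^[m] v) and parent^[m] v ∈ desc u:
      -- so parent^[m] v is on path from ud up; either = ud (∈ desc ud, contra handled), or above ud
      -- use: desc (parent^[m] v) ∋ ud, i.e. ∃ j, parent^[j] ud = parent^[m] v.
      rw [mem_desc] at h1
      obtain ⟨j, hj⟩ := h1
      cases j with
      | zero =>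
        exact absurd (hj ▸ T.mem_desc_self ud) hc
      | succ j =>
        -- parent^[j] u = parent^[m] v ∈ desc u ⟹ = u by antisymmetry
        have hju : T.parent^[j] u = T.parent^[m] v := by
          rw [← hj, Function.iterate_succ_apply, T.children_parent h]
        have hup : u ∈ T.desc (T.parent^[m] v) := by
          rw [mem_desc]; exact ⟨j, hju⟩
        exact T.desc_antisym hm hup

end RTree
namespace RTree

variable {V : Type} [Fintype V] [DecidableEq V] (T : RTree V) {u ud : V}

lemma descW_univ (u : V) : T.descW Finset.univ u = T.desc u := by
  simp [descW]

lemma mem_W' {v : V} : v ∈ Finset.univ \ T.desc ud ↔ v ∉ T.desc ud := by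
  simp

lemma mem_W'' {v : V} :
    v ∈ (Finset.univ \ T.desc u) ∪ insert u (T.desc ud) ↔
      v ∉ T.desc u ∨ v = u ∨ v ∈ T.desc ud := by
  simp [or_comm, or_assoc]
  tauto

lemma descW_W' (h : ud ∈ T.children u) :
    T.descW (Finset.univ \ T.desc ud) u = T.desc u \ T.desc ud := by
  ext v
  simp [descW, Finset.mem_sdiff, and_comm]

lemma descW_W'' (h : ud ∈ T.children u) :
    T.descW ((Finset.univ \ T.desc u) ∪ insert u (T.desc ud)) u = insert u (T.desc ud) := by
  ext v
  simp only [descW, Finset.mem_inter, mem_W'' (T := T), Finset.mem_insert]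
  constructor
  · rintro ⟨h1, h2 | h2 | h2⟩
    · exact absurd h1 h2
    · exact Or.inl h2
    · exact Or.inr h2
  · rintro (rfl | h1)
    · exact ⟨T.mem_desc_self v, Or.inr (Or.inl rfl)⟩
    · exact ⟨T.desc_child_subset h h1, Or.inr (Or.inr h1)⟩

/-- A subtree `desc v` with `v ∈ desc u \ desc ud`, `v ≠ u`, is disjoint from `desc ud`. -/
lemma desc_disjoint_descud (h : ud ∈ T.children u) {v : V}
    (hvu : v ∈ T.desc u) (hvd : v ∉ T.desc ud) (hne : v ≠ u) :
    T.desc v ∩ T.desc ud = ∅ := by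
  by_contra hcon
  rcases T.desc_nested_of_inter (Finset.nonempty_iff_ne_empty.2 hcon) with h1 | h1
  · exact hvd h1
  · -- ud ∈ desc v: ∃ j, parent^[j] ud = v; j ≥ 1 since v ∉ desc ud (v ≠ ud)
    rw [mem_desc] at h1
    obtain ⟨j, hj⟩ := h1
    cases j with
    | zero => exact hvd (hj ▸ T.mem_desc_self ud)
    | succ j =>
      have hju : T.parent^[j] u = v := by
        rw [← hj, Function.iterate_succ_apply, T.children_parent h]
      have hup : u ∈ T.desc v := by rw [mem_desc]; exact ⟨j, hju⟩
      exact hne (T.desc_antisym hvu hup)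

end RTree
namespace RTree

variable {V : Type} [Fintype V] [DecidableEq V] (T : RTree V) {u ud : V}

lemma boundary_eq_W' (h : ud ∈ T.children u) {B : Finset V}
    (hBu : B ⊆ T.desc u) (hBd : ∀ v ∈ B, v ∉ T.desc ud) (huB : u ∉ B) :
    T.boundaryW Finset.univ B = T.boundaryW (Finset.univ \ T.desc ud) B := by
  ext v
  simp only [boundaryW, Finset.mem_filter, Finset.mem_univ, true_and, mem_W' (T := T),
    Finset.mem_sdiff]
  constructor
  · intro hx
    refine ⟨?_, hx⟩
    intro hvd
    have hv : v ∉ B := fun hv => hBd v hv hvd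
    have hp : T.parent v ∉ B := by
      intro hp
      rcases T.parent_mem_desc_child h hvd with h1 | ⟨_, h2⟩
      · exact hBd _ hp h1
      · rw [h2] at hp; exact huB hp
    rw [Xor', xor_def] at hx; tauto
  · exact fun hx => hx.2

lemma boundary_eq_W'' (h : ud ∈ T.children u) {B : Finset V}
    (hB : B ⊆ insert u (T.desc ud)) (huB : u ∉ B) :
    T.boundaryW Finset.univ B =
      T.boundaryW ((Finset.univ \ T.desc u) ∪ insert u (T.desc ud)) B := by
  have hBd : B ⊆ T.desc ud := by
    intro v hv
    rcases Finset.mem_insert.1 (hB hv) with rfl | h1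
    · exact absurd hv huB
    · exact h1
  ext v
  simp only [boundaryW, Finset.mem_filter, Finset.mem_univ, true_and]
  constructor
  · intro hx
    refine ⟨?_, hx⟩
    rw [mem_W'' (T := T)]
    by_cases hvd : v ∈ T.desc ud
    · exact Or.inr (Or.inr hvd)
    · exfalso
      have hv : v ∉ B := fun hv => hvd (hBd hv)
      have hp : T.parent v ∉ B := fun hp => hvd (T.mem_desc_of_parent (hBd hp))
      rw [Xor', xor_def] at hx; tauto
  · exact fun hx => hx.2

lemma cutW_eq_W' (h : ud ∈ T.children u) {B : Finset V}
    (hBu : B ⊆ T.desc u) (hBd : ∀ v ∈ B, v ∉ T.desc ud) (huB : u ∉ B) :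
    T.cutW Finset.univ B = T.cutW (Finset.univ \ T.desc ud) B := by
  unfold cutW; rw [T.boundary_eq_W' h hBu hBd huB]

lemma cutW_eq_W'' (h : ud ∈ T.children u) {B : Finset V}
    (hB : B ⊆ insert u (T.desc ud)) (huB : u ∉ B) :
    T.cutW Finset.univ B =
      T.cutW ((Finset.univ \ T.desc u) ∪ insert u (T.desc ud)) B := by
  unfold cutW; rw [T.boundary_eq_W'' h hB huB]

lemma descW_of_boundary_W' (h : ud ∈ T.children u) {B : Finset V}
    (hBu : B ⊆ T.desc u) (hBd : ∀ v ∈ B, v ∉ T.desc ud) {v : V}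
    (hv : v ∈ (T.boundaryW (Finset.univ \ T.desc ud) B).erase u) :
    T.descW (Finset.univ \ T.desc ud) v = T.desc v := by
  obtain ⟨hne, hv⟩ := Finset.mem_erase.1 hv
  simp only [boundaryW, Finset.mem_filter, mem_W' (T := T), Finset.mem_sdiff,
    Finset.mem_univ, true_and] at hv
  obtain ⟨hvW, hx⟩ := hv
  have hvdu : v ∈ T.desc u := by
    rw [Xor'] at hx
    rcases hx with ⟨h1, _⟩ | ⟨h1, _⟩
    · exact hBu h1
    · exact T.mem_desc_of_parent (hBu h1)
  have hdisj := T.desc_disjoint_descud h hvdu hvW hne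
  unfold descW
  rw [Finset.eq_empty_iff_forall_notMem] at hdisj
  ext w
  simp only [Finset.mem_inter, Finset.mem_sdiff, Finset.mem_univ, true_and]
  exact ⟨fun hw => hw.1, fun hw => ⟨hw, fun hwd => hdisj w (Finset.mem_inter.2 ⟨hw, hwd⟩)⟩⟩

lemma descW_of_boundary_W'' (h : ud ∈ T.children u) {B : Finset V}
    (hB : B ⊆ insert u (T.desc ud)) {v : V}
    (hv : v ∈ (T.boundaryW ((Finset.univ \ T.desc u) ∪ insert u (T.desc ud)) B).erase u) :
    v ∈ T.desc ud ∧
      T.descW ((Finset.univ \ T.desc u) ∪ insert u (T.desc ud)) v = T.desc v := by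
  obtain ⟨hne, hv⟩ := Finset.mem_erase.1 hv
  simp only [boundaryW, Finset.mem_filter] at hv
  obtain ⟨hvW, hx⟩ := hv
  rw [mem_W'' (T := T)] at hvW
  have hvd : v ∈ T.desc ud := by
    rw [Xor'] at hx
    have key : ∀ w : V, w ∈ B → w ≠ u → w ∈ T.desc ud := by
      intro w hw hwne
      rcases Finset.mem_insert.1 (hB hw) with rfl | h1
      · exact absurd rfl hwne
      · exact h1
    rcases hx with ⟨h1, _⟩ | ⟨h1, _⟩
    · exact key v h1 hne
    · by_cases hpu : T.parent v = u
      · have hvu : v ∈ T.desc u := T.mem_desc_of_parent (hpu ▸ T.mem_desc_self u)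
        rcases hvW with h2 | h2 | h2
        · exact absurd hvu h2
        · exact absurd h2 hne
        · exact h2
      · exact T.mem_desc_of_parent (key _ h1 hpu)
  refine ⟨hvd, ?_⟩
  unfold descW
  ext w
  simp only [Finset.mem_inter]
  refine ⟨fun hw => hw.1, fun hw => ⟨hw, ?_⟩⟩
  rw [mem_W'' (T := T)]
  exact Or.inr (Or.inr (T.desc_trans hw hvd))

end RTree
namespace RTree

variable {V : Type} [Fintype V] [DecidableEq V] (T : RTree V) {u ud : V}

lemma boundary_split (h : ud ∈ T.children u) {B' B'' : Finset V}
    (hB'u : B' ⊆ T.desc u) (hB'd : ∀ v ∈ B', v ∉ T.desc ud) (huB' : u ∈ B')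
    (hB'' : B'' ⊆ insert u (T.desc ud)) (huB'' : u ∈ B'') :
    (T.boundaryW Finset.univ (B' ∪ B'')).erase u =
      (T.boundaryW (Finset.univ \ T.desc ud) B').erase u ∪
      (T.boundaryW ((Finset.univ \ T.desc u) ∪ insert u (T.desc ud)) B'').erase u := by
  have hB''u : B'' ⊆ T.desc u := by
    intro w hw
    rcases Finset.mem_insert.1 (hB'' hw) with rfl | h1
    · exact T.mem_desc_self w
    · exact T.desc_child_subset h h1
  ext v
  simp only [Finset.mem_union, Finset.mem_erase]
  by_cases hne : v = u
  · simp [hne]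
  simp only [hne, ne_eq, not_false_iff, true_and]
  simp only [boundaryW, Finset.mem_filter, Finset.mem_univ, true_and]
  by_cases hvu : v ∈ T.desc u
  · by_cases hvd : v ∈ T.desc ud
    · -- case 2 : W''-side only
      have hvW'' : v ∈ (Finset.univ \ T.desc u) ∪ insert u (T.desc ud) := by
        rw [mem_W'' (T := T)]; exact Or.inr (Or.inr hvd)
      have hvW' : v ∉ Finset.univ \ T.desc ud := by
        rw [mem_W' (T := T)]; exact not_not.2 hvd
      have h1 : (v ∈ B' ∪ B'') ↔ v ∈ B'' := by
        simp only [Finset.mem_union]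
        exact ⟨fun hx => hx.resolve_left (fun hx' => hB'd v hx' hvd), Or.inr⟩
      have h2 : (T.parent v ∈ B' ∪ B'') ↔ T.parent v ∈ B'' := by
        simp only [Finset.mem_union]
        rcases T.parent_mem_desc_child h hvd with hp | ⟨_, hp⟩
        · exact ⟨fun hx => hx.resolve_left (fun hx' => hB'd _ hx' hp), Or.inr⟩
        · rw [hp]; simp [huB', huB'']
      constructor
      · intro hx
        right
        refine ⟨hvW'', ?_⟩
        rwa [h1, h2] at hx
      · rintro (⟨hw, _⟩ | ⟨_, hx⟩)
        · exact absurd hw hvW'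
        · rwa [h1, h2]
    · -- case 3 : W'-side only
      have hvW'' : v ∉ (Finset.univ \ T.desc u) ∪ insert u (T.desc ud) := by
        rw [mem_W'' (T := T)]; push_neg; exact ⟨hvu, hne, hvd⟩
      have hvW' : v ∈ Finset.univ \ T.desc ud := by
        rw [mem_W' (T := T)]; exact hvd
      have h1 : (v ∈ B' ∪ B'') ↔ v ∈ B' := by
        simp only [Finset.mem_union]
        refine ⟨fun hx => hx.resolve_right (fun hx' => ?_), Or.inl⟩
        rcases Finset.mem_insert.1 (hB'' hx') with rfl | hc
        · exact hne rfl
        · exact hvd hc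
      have h2 : (T.parent v ∈ B' ∪ B'') ↔ T.parent v ∈ B' := by
        simp only [Finset.mem_union]
        constructor
        · rintro (hx | hx)
          · exact hx
          · rcases Finset.mem_insert.1 (hB'' hx) with hp | hc
            · rw [hp]; exact huB'
            · exact absurd (T.mem_desc_of_parent hc) hvd
        · exact Or.inl
      constructor
      · intro hx
        left
        refine ⟨hvW', ?_⟩
        rwa [h1, h2] at hx
      · rintro (⟨_, hx⟩ | ⟨hw, _⟩)
        · rwa [h1, h2]
        · exact absurd hw hvW''
  · -- case 1 : neither
    have hv1 : v ∉ B' ∪ B'' := by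
      intro hc
      rcases Finset.mem_union.1 hc with hc | hc
      · exact hvu (hB'u hc)
      · exact hvu (hB''u hc)
    have hv2 : T.parent v ∉ B' ∪ B'' := by
      intro hc
      apply hvu
      rcases Finset.mem_union.1 hc with hc | hc
      · exact T.mem_desc_of_parent (hB'u hc)
      · exact T.mem_desc_of_parent (hB''u hc)
    have hv3 : v ∉ B' := fun hc => hv1 (Finset.mem_union_left _ hc)
    have hv4 : T.parent v ∉ B' := fun hc => hv2 (Finset.mem_union_left _ hc)
    have hv5 : v ∉ B'' := fun hc => hv1 (Finset.mem_union_right _ hc)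
    have hv6 : T.parent v ∉ B'' := fun hc => hv2 (Finset.mem_union_right _ hc)
    constructor
    · intro hx; rw [Xor', xor_def] at hx; tauto
    · rintro (⟨_, hx⟩ | ⟨_, hx⟩) <;> (rw [Xor', xor_def] at hx; tauto)

lemma boundary_split_disjoint (h : ud ∈ T.children u) {B' B'' : Finset V}
    (hB'' : B'' ⊆ insert u (T.desc ud)) :
    Disjoint ((T.boundaryW (Finset.univ \ T.desc ud) B').erase u)
      ((T.boundaryW ((Finset.univ \ T.desc u) ∪ insert u (T.desc ud)) B'').erase u) := by
  rw [Finset.disjoint_left]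
  intro v hv1 hv2
  have h2 := (T.descW_of_boundary_W'' h hB'' hv2).1
  obtain ⟨_, hv1⟩ := Finset.mem_erase.1 hv1
  simp only [boundaryW, Finset.mem_filter, Finset.mem_sdiff] at hv1
  exact hv1.1.2 h2

lemma gamma_split (h : ud ∈ T.children u) (ξ : ℚ) {B' B'' : Finset V}
    (hB'u : B' ⊆ T.desc u) (hB'd : ∀ v ∈ B', v ∉ T.desc ud) (huB' : u ∈ B')
    (hB'' : B'' ⊆ insert u (T.desc ud)) (huB'' : u ∈ B'') :
    T.gammaValW Finset.univ ξ u (B' ∪ B'') =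
      T.gammaValW (Finset.univ \ T.desc ud) ξ u B' +
      T.gammaValW ((Finset.univ \ T.desc u) ∪ insert u (T.desc ud)) ξ u B'' := by
  unfold gammaValW
  rw [T.boundary_split h hB'u hB'd huB' hB'' huB'',
    Finset.sum_union (T.boundary_split_disjoint h hB'')]
  congr 1
  · refine Finset.sum_congr rfl fun v hv => ?_
    rw [T.descW_univ, ← T.descW_of_boundary_W' h hB'u hB'd hv]
  · refine Finset.sum_congr rfl fun v hv => ?_
    rw [T.descW_univ, ← (T.descW_of_boundary_W'' h hB'' hv).2]

end RTree
namespace RTree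

variable {V : Type} [Fintype V] [DecidableEq V] (T : RTree V) {u ud : V}

lemma apex {A : Finset V} (hA : T.connectedIn A) (hsub : A ⊆ T.desc u) (hu : u ∈ A) :
    ∀ v ∈ A, ∃ n : ℕ, T.parent^[n] v = u ∧ ∀ m : ℕ, m ≤ n → T.parent^[m] v ∈ A := by
  obtain ⟨a, ha, hch⟩ := hA
  obtain ⟨n, hn, _⟩ := hch u hu
  have hau : a = u := by
    have h1 : a ∈ T.desc u := hsub ha
    have h2 : u ∈ T.desc a := (T.mem_desc).2 ⟨n, hn⟩
    exact T.desc_antisym h1 h2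
  subst hau
  exact hch

/-- A connected part in `desc u` avoiding `u` is either inside `desc ud` or disjoint from it. -/
lemma part_location (h : ud ∈ T.children u) {A : Finset V} (hA : T.connectedIn A)
    (hsub : A ⊆ T.desc u) (hu : u ∉ A) :
    (A ⊆ T.desc ud) ∨ (∀ v ∈ A, v ∉ T.desc ud) := by
  obtain ⟨a, ha, hch⟩ := hA
  by_cases had : a ∈ T.desc ud
  · left
    intro v hv
    obtain ⟨n, hn, _⟩ := hch v hv
    exact T.desc_trans ((T.mem_desc).2 ⟨n, hn⟩) had
  · right
    intro v hv hvd
    obtain ⟨n, hn, _⟩ := hch v hv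
    have hadu : a ∈ T.desc u := hsub ha
    rcases T.chain_mem_union h hvd n (hn ▸ hadu) with h1 | h1
    · rw [hn] at h1; exact hu (h1 ▸ ha)
    · rw [hn] at h1; exact had h1

lemma connectedIn_sdiff_descud {A : Finset V} (hA : T.connectedIn A)
    (hsub : A ⊆ T.desc u) (hu : u ∈ A) (hud : u ∉ T.desc ud) :
    T.connectedIn (A \ T.desc ud) := by
  refine ⟨u, Finset.mem_sdiff.2 ⟨hu, hud⟩, fun v hv => ?_⟩
  obtain ⟨hvA, hvd⟩ := Finset.mem_sdiff.1 hv
  obtain ⟨n, hn, hchain⟩ := T.apex hA hsub hu v hvA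
  refine ⟨n, hn, fun m hm => Finset.mem_sdiff.2 ⟨hchain m hm, fun hc => hvd ?_⟩⟩
  exact T.desc_trans (T.mem_desc_parent_iterate m) hc

lemma connectedIn_inter_insert (h : ud ∈ T.children u) {A : Finset V} (hA : T.connectedIn A)
    (hsub : A ⊆ T.desc u) (hu : u ∈ A) :
    T.connectedIn (A ∩ insert u (T.desc ud)) := by
  refine ⟨u, Finset.mem_inter.2 ⟨hu, Finset.mem_insert_self u _⟩, fun v hv => ?_⟩
  obtain ⟨hvA, hvi⟩ := Finset.mem_inter.1 hv
  obtain ⟨n, hn, hchain⟩ := T.apex hA hsub hu v hvA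
  rcases Finset.mem_insert.1 hvi with rfl | hvd
  · exact ⟨0, rfl, fun m hm => by simp_all⟩
  · refine ⟨n, hn, fun m hm => Finset.mem_inter.2 ⟨hchain m hm, ?_⟩⟩
    rcases T.chain_mem_union h hvd m (hsub (hchain m hm)) with h1 | h1
    · rw [h1]; exact Finset.mem_insert_self u _
    · exact Finset.mem_insert_of_mem h1

lemma connectedIn_union {A B : Finset V} (hA : T.connectedIn A) (hB : T.connectedIn B)
    (hAsub : A ⊆ T.desc u) (hBsub : B ⊆ T.desc u) (huA : u ∈ A) (huB : u ∈ B) :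
    T.connectedIn (A ∪ B) := by
  refine ⟨u, Finset.mem_union_left _ huA, fun v hv => ?_⟩
  rcases Finset.mem_union.1 hv with hv | hv
  · obtain ⟨n, hn, hchain⟩ := T.apex hA hAsub huA v hv
    exact ⟨n, hn, fun m hm => Finset.mem_union_left _ (hchain m hm)⟩
  · obtain ⟨n, hn, hchain⟩ := T.apex hB hBsub huB v hv
    exact ⟨n, hn, fun m hm => Finset.mem_union_right _ (hchain m hm)⟩

end RTree
namespace RTree

variable {V : Type} [Fintype V] [DecidableEq V] (T : RTree V) {u ud : V}

lemma wsum_nonneg (A : Finset V) : 0 ≤ T.wsum A :=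
  Finset.sum_nonneg fun v _ => le_of_lt (T.w_pos v)

lemma c_nonneg (v : V) : 0 ≤ T.c v := by
  by_cases h : v = T.root
  · rw [h, T.c_root]
  · exact le_of_lt (T.c_pos v h)

lemma gammaValW_nonneg (W : Finset V) {ξ : ℚ} (hξ : 0 ≤ ξ) (u : V) (B : Finset V) :
    0 ≤ T.gammaValW W ξ u B := by
  refine Finset.sum_nonneg fun v _ => add_nonneg ?_ (T.c_nonneg v)
  exact mul_nonneg hξ (T.wsum_nonneg _)

lemma GammaW_nonneg (W : Finset V) {ξ : ℚ} (hξ : 0 ≤ ξ) (u : V) (k l : ℕ) :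
    (0 : EReal) ≤ T.GammaW W ξ u k l := by
  refine le_sInf fun x hx => ?_
  obtain ⟨h, A, hA, rfl⟩ := hx
  exact_mod_cast (by exact_mod_cast T.gammaValW_nonneg W hξ u (A ⟨0, h⟩) : (0:ℝ) ≤
    ((T.gammaValW W ξ u (A ⟨0, h⟩) : ℝ)))

lemma GammaW_ne_bot (W : Finset V) {ξ : ℚ} (hξ : 0 ≤ ξ) (u : V) (k l : ℕ) :
    T.GammaW W ξ u k l ≠ ⊥ :=
  fun h => by simpa [h] using T.GammaW_nonneg W hξ u k l

lemma GammaW_le (W : Finset V) (ξ : ℚ) (u : V) {k : ℕ} (hk : 0 < k) (l : ℕ)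
    {A : Fin k → Finset V} (hA : T.inCW W ξ u A l) :
    T.GammaW W ξ u k l ≤ ((T.gammaValW W ξ u (A ⟨0, hk⟩) : ℝ) : EReal) :=
  sInf_le ⟨hk, A, hA, rfl⟩

lemma GammaW_attained (W : Finset V) (ξ : ℚ) (u : V) (k l : ℕ)
    (h : T.GammaW W ξ u k l ≠ ⊤) :
    ∃ (hk : 0 < k) (A : Fin k → Finset V), T.inCW W ξ u A l ∧
      T.GammaW W ξ u k l = ((T.gammaValW W ξ u (A ⟨0, hk⟩) : ℝ) : EReal) := by
  set S := {x : EReal | ∃ (h : 0 < k) (A : Fin k → Finset V),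
    T.inCW W ξ u A l ∧ x = ((T.gammaValW W ξ u (A ⟨0, h⟩) : ℝ) : EReal)} with hS
  have hne : S.Nonempty := by
    by_contra hc
    rw [Set.not_nonempty_iff_eq_empty] at hc
    exact h (by rw [GammaW, ← hS, hc, sInf_empty])
  have hfin : S.Finite := by
    obtain ⟨x0, hk0, _⟩ := hne
    refine Set.Finite.subset (Set.finite_range
      (fun A : Fin k → Finset V => ((T.gammaValW W ξ u (A ⟨0, hk0⟩) : ℝ) : EReal))) ?_
    rintro x ⟨h', A, _, rfl⟩
    exact ⟨A, rfl⟩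
  have hmem : sInf S ∈ S := Set.Nonempty.csInf_mem hne hfin
  obtain ⟨hk, A, hA, hEq⟩ := hmem
  exact ⟨hk, A, hA, hEq⟩

end RTree
namespace RTree

variable {V : Type} [Fintype V] [DecidableEq V] (T : RTree V) {u ud : V}

lemma combine (h : ud ∈ T.children u) (ξ : ℚ) {k' k'' l' l'' : ℕ}
    (hk' : 0 < k') (hk'' : 0 < k'')
    {A' : Fin k' → Finset V} (hA' : T.inCW (Finset.univ \ T.desc ud) ξ u A' l')
    {A'' : Fin k'' → Finset V}
    (hA'' : T.inCW ((Finset.univ \ T.desc u) ∪ insert u (T.desc ud)) ξ u A'' l'') :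
    ∃ A : Fin (k' + k'' - 1) → Finset V,
      T.inCW Finset.univ ξ u A (l' + l'') ∧
      T.gammaValW Finset.univ ξ u (A ⟨0, by omega⟩) =
        T.gammaValW (Finset.univ \ T.desc ud) ξ u (A' ⟨0, hk'⟩) +
        T.gammaValW ((Finset.univ \ T.desc u) ∪ insert u (T.desc ud)) ξ u (A'' ⟨0, hk''⟩) := by
  obtain ⟨hne', hdisj', hsubW', hconn', hu0', hcond', hres'⟩ := hA'
  obtain ⟨hne'', hdisj'', hsubW'', hconn'', hu0'', hcond'', hres''⟩ := hA''
  have hpos : 0 < k' + k'' - 1 := by omega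
  have hsub' : ∀ i, A' i ⊆ T.desc u ∧ ∀ v ∈ A' i, v ∉ T.desc ud := by
    intro i
    have := hsubW' i
    rw [T.descW_W' h] at this
    exact ⟨fun v hv => (Finset.mem_sdiff.1 (this hv)).1,
      fun v hv => (Finset.mem_sdiff.1 (this hv)).2⟩
  have hsub'' : ∀ i, A'' i ⊆ insert u (T.desc ud) := by
    intro i
    have := hsubW'' i
    rwa [T.descW_W'' h] at this
  have hsub''u : ∀ i, A'' i ⊆ T.desc u := by
    intro i v hv
    rcases Finset.mem_insert.1 (hsub'' i hv) with rfl | hv'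
    · exact T.mem_desc_self v
    · exact T.desc_child_subset h hv'
  have hu' : u ∈ A' ⟨0, hk'⟩ := hu0' hk'
  have hu'' : u ∈ A'' ⟨0, hk''⟩ := hu0'' hk''
  have hnu' : ∀ i : Fin k', (i : ℕ) ≠ 0 → u ∉ A' i := by
    intro i hi hc
    have hd := hdisj' ⟨0, hk'⟩ i (fun hc' => hi (congrArg Fin.val hc'.symm))
    exact Finset.disjoint_left.1 hd hu' hc
  have hnu'' : ∀ i : Fin k'', (i : ℕ) ≠ 0 → u ∉ A'' i := by
    intro i hi hc
    have hd := hdisj'' ⟨0, hk''⟩ i (fun hc' => hi (congrArg Fin.val hc'.symm))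
    exact Finset.disjoint_left.1 hd hu'' hc
  have hcross : ∀ (i : Fin k') (j : Fin k''), (i : ℕ) ≠ 0 ∨ (j : ℕ) ≠ 0 →
      Disjoint (A' i) (A'' j) := by
    intro i j hij
    rw [Finset.disjoint_left]
    intro w hw hw'
    rcases Finset.mem_insert.1 (hsub'' j hw') with rfl | hwd
    · rcases hij with hi | hj
      · exact hnu' i hi hw
      · exact hnu'' j hj hw'
    · exact (hsub' i).2 w hw hwd
  set g : Fin (k' + k'' - 1) → Finset V := fun i =>
    if h0 : (i : ℕ) = 0 then A' ⟨0, hk'⟩ ∪ A'' ⟨0, hk''⟩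
    else if hc : (i : ℕ) < k' then A' ⟨(i : ℕ), hc⟩
    else A'' ⟨(i : ℕ) - k' + 1, by omega⟩ with hgdef
  have hg0 : ∀ (i : Fin (k' + k'' - 1)), (i : ℕ) = 0 →
      g i = A' ⟨0, hk'⟩ ∪ A'' ⟨0, hk''⟩ := by
    intro i h0; simp [hgdef, h0]
  have hg1 : ∀ (i : Fin (k' + k'' - 1)) (h0 : (i : ℕ) ≠ 0) (hc : (i : ℕ) < k'),
      g i = A' ⟨(i : ℕ), hc⟩ := by
    intro i h0 hc; simp [hgdef, h0, hc]
  have hg2 : ∀ (i : Fin (k' + k'' - 1)) (h0 : (i : ℕ) ≠ 0) (hc : ¬ (i : ℕ) < k'),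
      g i = A'' ⟨(i : ℕ) - k' + 1, by omega⟩ := by
    intro i h0 hc; simp [hgdef, h0, hc]
  refine ⟨g, ⟨?_, ?_, ?_, ?_, ?_, ?_, ?_⟩, ?_⟩
  · -- nonempty
    intro i
    by_cases h0 : (i : ℕ) = 0
    · rw [hg0 i h0]
      exact (hne' _).mono Finset.subset_union_left
    · by_cases hc : (i : ℕ) < k'
      · rw [hg1 i h0 hc]; exact hne' _
      · rw [hg2 i h0 hc]; exact hne'' _
  · -- pairwise disjoint
    intro i j hij
    have hvne : (i : ℕ) ≠ (j : ℕ) := fun hc => hij (Fin.ext hc)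
    by_cases hi0 : (i : ℕ) = 0 <;> by_cases hj0 : (j : ℕ) = 0
    · exact absurd (hi0.trans hj0.symm) hvne
    · rw [hg0 i hi0]
      by_cases hjc : (j : ℕ) < k'
      · rw [hg1 j hj0 hjc]
        refine Finset.disjoint_union_left.2 ⟨?_, ?_⟩
        · exact hdisj' _ _ (fun hc => hj0 (congrArg Fin.val hc).symm)
        · exact (hcross _ _ (Or.inl hj0)).symm
      · rw [hg2 j hj0 hjc]
        refine Finset.disjoint_union_left.2 ⟨?_, ?_⟩
        · exact hcross _ _ (Or.inr (Nat.succ_ne_zero _))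
        · exact hdisj'' _ _ (by intro hc; have := congrArg Fin.val hc; simp at this)
    · rw [hg0 j hj0]
      by_cases hic : (i : ℕ) < k'
      · rw [hg1 i hi0 hic]
        refine Finset.disjoint_union_right.2 ⟨?_, ?_⟩
        · exact hdisj' _ _ (fun hc => hi0 (congrArg Fin.val hc))
        · exact hcross _ _ (Or.inl hi0)
      · rw [hg2 i hi0 hic]
        refine Finset.disjoint_union_right.2 ⟨?_, ?_⟩
        · exact (hcross _ _ (Or.inr (Nat.succ_ne_zero _))).symm
        · exact hdisj'' _ _ (by intro hc; have := congrArg Fin.val hc; simp at this)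
    · by_cases hic : (i : ℕ) < k' <;> by_cases hjc : (j : ℕ) < k'
      · rw [hg1 i hi0 hic, hg1 j hj0 hjc]
        exact hdisj' _ _ (by intro hc; have := congrArg Fin.val hc; simp at this; omega)
      · rw [hg1 i hi0 hic, hg2 j hj0 hjc]
        exact hcross _ _ (Or.inl hi0)
      · rw [hg2 i hi0 hic, hg1 j hj0 hjc]
        exact (hcross _ _ (Or.inl hj0)).symm
      · rw [hg2 i hi0 hic, hg2 j hj0 hjc]
        exact hdisj'' _ _ (by intro hc; have := congrArg Fin.val hc; simp at this; omega)
  · -- subset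
    intro i
    rw [T.descW_univ]
    by_cases h0 : (i : ℕ) = 0
    · rw [hg0 i h0]
      exact Finset.union_subset (hsub' _).1 (hsub''u _)
    · by_cases hc : (i : ℕ) < k'
      · rw [hg1 i h0 hc]; exact (hsub' _).1
      · rw [hg2 i h0 hc]; exact hsub''u _
  · -- connected
    intro i
    by_cases h0 : (i : ℕ) = 0
    · rw [hg0 i h0]
      exact T.connectedIn_union (hconn' _) (hconn'' _) (hsub' _).1 (hsub''u _) hu' hu''
    · by_cases hc : (i : ℕ) < k'
      · rw [hg1 i h0 hc]; exact hconn' _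
      · rw [hg2 i h0 hc]; exact hconn'' _
  · -- u ∈ g 0
    intro hp
    rw [hg0 _ rfl]
    exact Finset.mem_union_left _ hu'
  · -- conductance
    intro i hi0
    by_cases hc : (i : ℕ) < k'
    · rw [hg1 i hi0 hc, T.cutW_eq_W' h (hsub' _).1 (hsub' _).2 (hnu' _ (by simpa using hi0))]
      exact hcond' _ (by simpa using hi0)
    · rw [hg2 i hi0 hc, T.cutW_eq_W'' h (hsub'' _) (hnu'' _ (by simp))]
      exact hcond'' _ (by simp)
  · -- residue
    rw [T.descW_univ]
    have hsubres : T.desc u \ Finset.univ.biUnion g ⊆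
        (T.descW (Finset.univ \ T.desc ud) u \ Finset.univ.biUnion A') ∪
        (T.descW ((Finset.univ \ T.desc u) ∪ insert u (T.desc ud)) u \
          Finset.univ.biUnion A'') := by
      intro w hw
      obtain ⟨hwu, hwn⟩ := Finset.mem_sdiff.1 hw
      simp only [Finset.mem_biUnion, Finset.mem_univ, true_and, not_exists] at hwn
      have hw0 := hwn ⟨0, hpos⟩
      rw [hg0 _ rfl] at hw0
      by_cases hwd : w ∈ T.desc ud
      · refine Finset.mem_union_right _ (Finset.mem_sdiff.2 ⟨?_, ?_⟩)
        · rw [T.descW_W'' h]; exact Finset.mem_insert_of_mem hwd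
        · simp only [Finset.mem_biUnion, Finset.mem_univ, true_and, not_exists]
          intro j hj
          by_cases hj0 : (j : ℕ) = 0
          · refine hw0 (Finset.mem_union_right _ ?_)
            have : j = ⟨0, hk''⟩ := Fin.ext hj0
            rwa [this] at hj
          · have hidx : k' - 1 + (j : ℕ) < k' + k'' - 1 := by omega
            have := hwn ⟨k' - 1 + (j : ℕ), hidx⟩
            rw [hg2 ⟨k' - 1 + (j : ℕ), hidx⟩ (by simp; omega) (by simp; omega)] at this
            apply this
            have : (⟨k' - 1 + (j : ℕ) - k' + 1, by omega⟩ : Fin k'') = j := by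
              apply Fin.ext; simp; omega
            rwa [this]
      · refine Finset.mem_union_left _ (Finset.mem_sdiff.2 ⟨?_, ?_⟩)
        · rw [T.descW_W' h]; exact Finset.mem_sdiff.2 ⟨hwu, hwd⟩
        · simp only [Finset.mem_biUnion, Finset.mem_univ, true_and, not_exists]
          intro j hj
          by_cases hj0 : (j : ℕ) = 0
          · refine hw0 (Finset.mem_union_left _ ?_)
            have : j = ⟨0, hk'⟩ := Fin.ext hj0
            rwa [this] at hj
          · have hidx : (j : ℕ) < k' + k'' - 1 := by omega
            have := hwn ⟨(j : ℕ), hidx⟩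
            rw [hg1 ⟨(j : ℕ), hidx⟩ (by simpa using hj0) (by simpa using j.isLt)] at this
            apply this
            have : (⟨(j : ℕ), j.isLt⟩ : Fin k') = j := Fin.ext rfl
            rwa [this]
    calc (T.desc u \ Finset.univ.biUnion g).card
        ≤ _ := Finset.card_le_card hsubres
      _ ≤ _ := Finset.card_union_le _ _
      _ ≤ l' + l'' := Nat.add_le_add hres' hres''
  · -- gamma value
    rw [hg0 _ rfl]
    exact T.gamma_split h ξ (hsub' _).1 (hsub' _).2 hu' (hsub'' _) hu''

end RTree
namespace RTree

variable {V : Type} [Fintype V] [DecidableEq V] (T : RTree V) {u ud : V}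

lemma split_witness (h : ud ∈ T.children u) (ξ : ℚ) {k l : ℕ} (hk : 0 < k)
    {A : Fin k → Finset V} (hA : T.inCW Finset.univ ξ u A l) :
    ∃ (k' k'' l' l'' : ℕ) (hk' : 0 < k') (hk'' : 0 < k'')
      (A' : Fin k' → Finset V) (A'' : Fin k'' → Finset V),
      k' + k'' = k + 1 ∧ l' + l'' = l ∧
      T.inCW (Finset.univ \ T.desc ud) ξ u A' l' ∧
      T.inCW ((Finset.univ \ T.desc u) ∪ insert u (T.desc ud)) ξ u A'' l'' ∧
      T.gammaValW Finset.univ ξ u (A ⟨0, hk⟩) =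
        T.gammaValW (Finset.univ \ T.desc ud) ξ u (A' ⟨0, hk'⟩) +
        T.gammaValW ((Finset.univ \ T.desc u) ∪ insert u (T.desc ud)) ξ u (A'' ⟨0, hk''⟩) := by
  obtain ⟨hne, hdisj, hsubW, hconn, hu0, hcond, hres⟩ := hA
  have hsub : ∀ i, A i ⊆ T.desc u := by
    intro i
    have := hsubW i
    rwa [T.descW_univ] at this
  have hu : u ∈ A ⟨0, hk⟩ := hu0 hk
  have hund : u ∉ T.desc ud := T.not_mem_desc_child h
  have hnu : ∀ i : Fin k, (i : ℕ) ≠ 0 → u ∉ A i := by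
    intro i hi hc
    have hd := hdisj ⟨0, hk⟩ i (fun hc' => hi (congrArg Fin.val hc'.symm))
    exact Finset.disjoint_left.1 hd hu hc
  set B' : Finset V := A ⟨0, hk⟩ \ T.desc ud with hB'def
  set B'' : Finset V := A ⟨0, hk⟩ ∩ insert u (T.desc ud) with hB''def
  have huB' : u ∈ B' := Finset.mem_sdiff.2 ⟨hu, hund⟩
  have huB'' : u ∈ B'' := Finset.mem_inter.2 ⟨hu, Finset.mem_insert_self u _⟩
  have hA0eq : A ⟨0, hk⟩ = B' ∪ B'' := by
    ext w
    simp only [hB'def, hB''def, Finset.mem_union, Finset.mem_sdiff, Finset.mem_inter,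
      Finset.mem_insert]
    constructor
    · intro hw
      by_cases hwd : w ∈ T.desc ud
      · exact Or.inr ⟨hw, Or.inr hwd⟩
      · exact Or.inl ⟨hw, hwd⟩
    · rintro (⟨hw, _⟩ | ⟨hw, _⟩) <;> exact hw
  have hloc : ∀ i : Fin k, (i : ℕ) ≠ 0 →
      (A i ⊆ T.desc ud) ∨ (∀ v ∈ A i, v ∉ T.desc ud) :=
    fun i hi => T.part_location h (hconn i) (hsub i) (hnu i hi)
  set s' : Finset (Fin k) :=
    Finset.univ.filter (fun i => (i : ℕ) ≠ 0 ∧ ¬ A i ⊆ T.desc ud) with hs'def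
  set s'' : Finset (Fin k) :=
    Finset.univ.filter (fun i => (i : ℕ) ≠ 0 ∧ A i ⊆ T.desc ud) with hs''def
  have hs'far : ∀ i ∈ s', ∀ v ∈ A i, v ∉ T.desc ud := by
    intro i hi
    rw [hs'def, Finset.mem_filter] at hi
    exact (hloc i hi.2.1).resolve_left hi.2.2
  have hs'ne : ∀ i ∈ s', (i : ℕ) ≠ 0 := by
    intro i hi; rw [hs'def, Finset.mem_filter] at hi; exact hi.2.1
  have hs''sub : ∀ i ∈ s'', A i ⊆ T.desc ud := by
    intro i hi; rw [hs''def, Finset.mem_filter] at hi; exact hi.2.2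
  have hs''ne : ∀ i ∈ s'', (i : ℕ) ≠ 0 := by
    intro i hi; rw [hs''def, Finset.mem_filter] at hi; exact hi.2.1
  have hdisjss : Disjoint s' s'' := by
    rw [Finset.disjoint_left]
    intro i hi1 hi2
    rw [hs'def, Finset.mem_filter] at hi1
    rw [hs''def, Finset.mem_filter] at hi2
    exact hi1.2.2 hi2.2.2
  have hunion : s' ∪ s'' = Finset.univ.filter (fun i : Fin k => (i : ℕ) ≠ 0) := by
    ext i
    simp only [hs'def, hs''def, Finset.mem_union, Finset.mem_filter, Finset.mem_univ, true_and]
    tauto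
  have hcards : s'.card + s''.card = k - 1 := by
    rw [← Finset.card_union_of_disjoint hdisjss, hunion]
    have : (Finset.univ.filter (fun i : Fin k => (i : ℕ) ≠ 0)) =
        Finset.univ.erase ⟨0, hk⟩ := by
      ext i
      simp only [Finset.mem_filter, Finset.mem_univ, true_and, Finset.mem_erase, and_true]
      constructor
      · exact fun hi hc => hi (congrArg Fin.val hc)
      · exact fun hi hc => hi (Fin.ext hc)
    rw [this, Finset.card_erase_of_mem (Finset.mem_univ _), Finset.card_univ, Fintype.card_fin]
  set e' := s'.orderEmbOfFin (rfl : s'.card = s'.card) with he'def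
  set e'' := s''.orderEmbOfFin (rfl : s''.card = s''.card) with he''def
  have he'mem : ∀ j, e' j ∈ s' := fun j => Finset.orderEmbOfFin_mem s' rfl j
  have he''mem : ∀ j, e'' j ∈ s'' := fun j => Finset.orderEmbOfFin_mem s'' rfl j
  have he'surj : ∀ i ∈ s', ∃ j, e' j = i := by
    intro i hi
    have : (i : Fin k) ∈ Set.range e' := by
      rw [he'def, Finset.range_orderEmbOfFin]; exact hi
    exact this
  have he''surj : ∀ i ∈ s'', ∃ j, e'' j = i := by
    intro i hi
    have : (i : Fin k) ∈ Set.range e'' := by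
      rw [he''def, Finset.range_orderEmbOfFin]; exact hi
    exact this
  set A' : Fin (s'.card + 1) → Finset V := fun i =>
    if h0 : (i : ℕ) = 0 then B' else A (e' ⟨(i : ℕ) - 1, by omega⟩) with hA'def
  set A'' : Fin (s''.card + 1) → Finset V := fun i =>
    if h0 : (i : ℕ) = 0 then B'' else A (e'' ⟨(i : ℕ) - 1, by omega⟩) with hA''def
  have hA'0 : ∀ (i : Fin (s'.card + 1)), (i : ℕ) = 0 → A' i = B' := by
    intro i h0; simp only [hA'def]; rw [dif_pos h0]
  have hA'1 : ∀ (i : Fin (s'.card + 1)) (h0 : (i : ℕ) ≠ 0),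
      A' i = A (e' ⟨(i : ℕ) - 1, by omega⟩) := by
    intro i h0; simp only [hA'def]; rw [dif_neg h0]
  have hA''0 : ∀ (i : Fin (s''.card + 1)), (i : ℕ) = 0 → A'' i = B'' := by
    intro i h0; simp only [hA''def]; rw [dif_pos h0]
  have hA''1 : ∀ (i : Fin (s''.card + 1)) (h0 : (i : ℕ) ≠ 0),
      A'' i = A (e'' ⟨(i : ℕ) - 1, by omega⟩) := by
    intro i h0; simp only [hA''def]; rw [dif_neg h0]
  -- residues
  set r' := (T.descW (Finset.univ \ T.desc ud) u \ Finset.univ.biUnion A').card with hr'def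
  set r'' := ((T.descW ((Finset.univ \ T.desc u) ∪ insert u (T.desc ud)) u \
    Finset.univ.biUnion A'')).card with hr''def
  have hB'mem : B' ⊆ Finset.univ.biUnion A' := by
    intro w hw
    rw [Finset.mem_biUnion]
    exact ⟨⟨0, Nat.succ_pos _⟩, Finset.mem_univ _, by rw [hA'0 _ rfl]; exact hw⟩
  have hB''mem : B'' ⊆ Finset.univ.biUnion A'' := by
    intro w hw
    rw [Finset.mem_biUnion]
    exact ⟨⟨0, Nat.succ_pos _⟩, Finset.mem_univ _, by rw [hA''0 _ rfl]; exact hw⟩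
  have hresdisj : Disjoint
      (T.descW (Finset.univ \ T.desc ud) u \ Finset.univ.biUnion A')
      (T.descW ((Finset.univ \ T.desc u) ∪ insert u (T.desc ud)) u \
        Finset.univ.biUnion A'') := by
    rw [Finset.disjoint_left]
    intro w hw1 hw2
    obtain ⟨hw1a, hw1b⟩ := Finset.mem_sdiff.1 hw1
    obtain ⟨hw2a, hw2b⟩ := Finset.mem_sdiff.1 hw2
    rw [T.descW_W' h, Finset.mem_sdiff] at hw1a
    rw [T.descW_W'' h, Finset.mem_insert] at hw2a
    rcases hw2a with rfl | hw2a
    · exact hw1b (hB'mem huB')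
    · exact hw1a.2 hw2a
  have hressub :
      (T.descW (Finset.univ \ T.desc ud) u \ Finset.univ.biUnion A') ∪
      (T.descW ((Finset.univ \ T.desc u) ∪ insert u (T.desc ud)) u \
        Finset.univ.biUnion A'') ⊆
      T.descW Finset.univ u \ Finset.univ.biUnion A := by
    intro w hw
    rw [T.descW_univ]
    rcases Finset.mem_union.1 hw with hw | hw
    · obtain ⟨hwa, hwb⟩ := Finset.mem_sdiff.1 hw
      rw [T.descW_W' h, Finset.mem_sdiff] at hwa
      simp only [Finset.mem_biUnion, Finset.mem_univ, true_and, not_exists] at hwb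
      refine Finset.mem_sdiff.2 ⟨hwa.1, ?_⟩
      simp only [Finset.mem_biUnion, Finset.mem_univ, true_and, not_exists]
      intro i hi
      by_cases hi0 : (i : ℕ) = 0
      · have : i = ⟨0, hk⟩ := Fin.ext hi0
        rw [this, hA0eq] at hi
        rcases Finset.mem_union.1 hi with hi | hi
        · exact hwb ⟨0, Nat.succ_pos _⟩ (by rw [hA'0 _ rfl]; exact hi)
        · rcases Finset.mem_insert.1 (Finset.mem_inter.1 hi).2 with rfl | hc
          · exact hwb ⟨0, Nat.succ_pos _⟩ (by rw [hA'0 _ rfl]; exact huB')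
          · exact hwa.2 hc
      · by_cases his : i ∈ s'
        · obtain ⟨j, hj⟩ := he'surj i his
          refine hwb ⟨(j : ℕ) + 1, by omega⟩ ?_
          rw [hA'1 _ (Nat.succ_ne_zero _)]
          have : (⟨(j : ℕ) + 1 - 1, by omega⟩ : Fin s'.card) = j := Fin.ext (by simp)
          rw [this, hj]
          exact hi
        · have his'' : i ∈ s'' := by
            have : i ∈ s' ∪ s'' := by
              rw [hunion, Finset.mem_filter]; exact ⟨Finset.mem_univ _, hi0⟩
            exact (Finset.mem_union.1 this).resolve_left his
          exact hwa.2 (hs''sub i his'' hi)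
    · obtain ⟨hwa, hwb⟩ := Finset.mem_sdiff.1 hw
      rw [T.descW_W'' h] at hwa
      simp only [Finset.mem_biUnion, Finset.mem_univ, true_and, not_exists] at hwb
      have hwdu : w ∈ T.desc u := by
        rcases Finset.mem_insert.1 hwa with rfl | hc
        · exact T.mem_desc_self w
        · exact T.desc_child_subset h hc
      refine Finset.mem_sdiff.2 ⟨hwdu, ?_⟩
      simp only [Finset.mem_biUnion, Finset.mem_univ, true_and, not_exists]
      intro i hi
      have hwnu : w ≠ u := by
        rintro rfl
        exact hwb ⟨0, Nat.succ_pos _⟩ (by rw [hA''0 _ rfl]; exact huB'')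
      have hwdd : w ∈ T.desc ud := by
        rcases Finset.mem_insert.1 hwa with rfl | hc
        · exact absurd rfl hwnu
        · exact hc
      by_cases hi0 : (i : ℕ) = 0
      · have : i = ⟨0, hk⟩ := Fin.ext hi0
        rw [this, hA0eq] at hi
        rcases Finset.mem_union.1 hi with hi | hi
        · exact (Finset.mem_sdiff.1 hi).2 hwdd
        · exact hwb ⟨0, Nat.succ_pos _⟩ (by rw [hA''0 _ rfl]; exact hi)
      · by_cases his : i ∈ s''
        · obtain ⟨j, hj⟩ := he''surj i his
          refine hwb ⟨(j : ℕ) + 1, by omega⟩ ?_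
          rw [hA''1 _ (Nat.succ_ne_zero _)]
          have : (⟨(j : ℕ) + 1 - 1, by omega⟩ : Fin s''.card) = j := Fin.ext (by simp)
          rw [this, hj]
          exact hi
        · have his' : i ∈ s' := by
            have : i ∈ s' ∪ s'' := by
              rw [hunion, Finset.mem_filter]; exact ⟨Finset.mem_univ _, hi0⟩
            exact (Finset.mem_union.1 this).resolve_right his
          exact hs'far i his' w hi hwdd
  have hrsum : r' + r'' ≤ l := by
    rw [hr'def, hr''def, ← Finset.card_union_of_disjoint hresdisj]
    exact le_trans (Finset.card_le_card hressub) hres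
  refine ⟨s'.card + 1, s''.card + 1, r', l - r', Nat.succ_pos _, Nat.succ_pos _, A', A'',
    by omega, by omega, ?_, ?_, ?_⟩
  · -- inCW W' A'
    refine ⟨?_, ?_, ?_, ?_, ?_, ?_, ?_⟩
    · intro i
      by_cases h0 : (i : ℕ) = 0
      · rw [hA'0 i h0]; exact ⟨u, huB'⟩
      · rw [hA'1 i h0]; exact hne _
    · intro i j hij
      have hvne : (i : ℕ) ≠ (j : ℕ) := fun hc => hij (Fin.ext hc)
      by_cases hi0 : (i : ℕ) = 0 <;> by_cases hj0 : (j : ℕ) = 0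
      · exact absurd (hi0.trans hj0.symm) hvne
      · rw [hA'0 i hi0, hA'1 j hj0]
        refine Finset.disjoint_of_subset_left (Finset.sdiff_subset) ?_
        exact hdisj _ _ (fun hc => hs'ne _ (he'mem _) (congrArg Fin.val hc).symm)
      · rw [hA'1 i hi0, hA'0 j hj0]
        refine Finset.disjoint_of_subset_right (Finset.sdiff_subset) ?_
        exact hdisj _ _ (fun hc => hs'ne _ (he'mem _) (congrArg Fin.val hc))
      · rw [hA'1 i hi0, hA'1 j hj0]
        refine hdisj _ _ (fun hc => ?_)
        have := e'.injective hc
        have := congrArg Fin.val this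
        simp at this
        omega
    · intro i
      rw [T.descW_W' h]
      by_cases h0 : (i : ℕ) = 0
      · rw [hA'0 i h0]
        exact fun w hw => Finset.mem_sdiff.2
          ⟨hsub _ (Finset.mem_sdiff.1 hw).1, (Finset.mem_sdiff.1 hw).2⟩
      · rw [hA'1 i h0]
        exact fun w hw => Finset.mem_sdiff.2
          ⟨hsub _ hw, hs'far _ (he'mem _) w hw⟩
    · intro i
      by_cases h0 : (i : ℕ) = 0
      · rw [hA'0 i h0]
        exact T.connectedIn_sdiff_descud (hconn _) (hsub _) hu hund
      · rw [hA'1 i h0]; exact hconn _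
    · intro hp
      rw [hA'0 _ rfl]
      exact huB'
    · intro i hi0
      rw [hA'1 i hi0,
        ← T.cutW_eq_W' h (hsub _) (hs'far _ (he'mem _)) (hnu _ (hs'ne _ (he'mem _)))]
      exact hcond _ (hs'ne _ (he'mem _))
    · exact le_of_eq hr'def.symm
  · -- inCW W'' A''
    refine ⟨?_, ?_, ?_, ?_, ?_, ?_, ?_⟩
    · intro i
      by_cases h0 : (i : ℕ) = 0
      · rw [hA''0 i h0]; exact ⟨u, huB''⟩
      · rw [hA''1 i h0]; exact hne _
    · intro i j hij
      have hvne : (i : ℕ) ≠ (j : ℕ) := fun hc => hij (Fin.ext hc)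
      by_cases hi0 : (i : ℕ) = 0 <;> by_cases hj0 : (j : ℕ) = 0
      · exact absurd (hi0.trans hj0.symm) hvne
      · rw [hA''0 i hi0, hA''1 j hj0]
        refine Finset.disjoint_of_subset_left (Finset.inter_subset_left) ?_
        exact hdisj _ _ (fun hc => hs''ne _ (he''mem _) (congrArg Fin.val hc).symm)
      · rw [hA''1 i hi0, hA''0 j hj0]
        refine Finset.disjoint_of_subset_right (Finset.inter_subset_left) ?_
        exact hdisj _ _ (fun hc => hs''ne _ (he''mem _) (congrArg Fin.val hc))
      · rw [hA''1 i hi0, hA''1 j hj0]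
        refine hdisj _ _ (fun hc => ?_)
        have := e''.injective hc
        have := congrArg Fin.val this
        simp at this
        omega
    · intro i
      rw [T.descW_W'' h]
      by_cases h0 : (i : ℕ) = 0
      · rw [hA''0 i h0]
        exact fun w hw => (Finset.mem_inter.1 hw).2
      · rw [hA''1 i h0]
        exact fun w hw => Finset.mem_insert_of_mem (hs''sub _ (he''mem _) hw)
    · intro i
      by_cases h0 : (i : ℕ) = 0
      · rw [hA''0 i h0]
        exact T.connectedIn_inter_insert h (hconn _) (hsub _) hu
      · rw [hA''1 i h0]; exact hconn _
    · intro hp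
      rw [hA''0 _ rfl]
      exact huB''
    · intro i hi0
      rw [hA''1 i hi0,
        ← T.cutW_eq_W'' h (fun w hw => Finset.mem_insert_of_mem (hs''sub _ (he''mem _) hw))
          (hnu _ (hs''ne _ (he''mem _)))]
      exact hcond _ (hs''ne _ (he''mem _))
    · rw [← hr''def]; omega
  · -- gamma value
    rw [hA'0 _ rfl, hA''0 _ rfl, hA0eq]
    refine T.gamma_split h ξ ?_ ?_ huB' ?_ huB''
    · exact fun w hw => hsub _ (Finset.mem_sdiff.1 hw).1
    · exact fun w hw => (Finset.mem_sdiff.1 hw).2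
    · exact fun w hw => (Finset.mem_inter.1 hw).2

end RTree



/-- inductive step of Lemma 2: for a vertex `u` with at least two
children and a distinguished child `u_d`, letting `T' = T \ T_{u_d}` (ground set
`univ \ desc u_d`) and `T'' = T \ (T_{u_1} ∪ ⋯ ∪ T_{u_{d−1}})` (ground set
`(univ \ desc u) ∪ {u} ∪ desc u_d`), we have
`Γ(k,l) = min{Γ'(k',l') + Γ''(k'',l'') : k' + k'' = k + 1, k',k'' ≥ 1, l' + l'' = l}`. -/
theorem stmt14 {V : Type} [Fintype V] [DecidableEq V] (T : RTree V)
    (ξ : ℚ) (hξ : 0 ≤ ξ) (u ud : V) (hud : ud ∈ T.children u)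
    (hd2 : ∃ v ∈ T.children u, v ≠ ud) (k l : ℕ) (hk : 1 ≤ k) :
    T.GammaW Finset.univ ξ u k l =
      sInf {x : EReal | ∃ k' k'' l' l'' : ℕ, 1 ≤ k' ∧ 1 ≤ k'' ∧ k' + k'' = k + 1 ∧
        l' + l'' = l ∧
        x = T.GammaW (Finset.univ \ T.desc ud) ξ u k' l' +
            T.GammaW ((Finset.univ \ T.desc u) ∪ insert u (T.desc ud)) ξ u k'' l''} := by
  apply le_antisymm
  · refine le_sInf fun x hx => ?_
    obtain ⟨k', k'', l', l'', hk', hk'', hksum, hlsum, rfl⟩ := hx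
    by_cases hT' : T.GammaW (Finset.univ \ T.desc ud) ξ u k' l' = ⊤
    · rw [hT', EReal.top_add_of_ne_bot (T.GammaW_ne_bot _ hξ _ _ _)]
      exact le_top
    by_cases hT'' : T.GammaW ((Finset.univ \ T.desc u) ∪ insert u (T.desc ud)) ξ u k'' l'' = ⊤
    · rw [hT'', EReal.add_top_of_ne_bot (T.GammaW_ne_bot _ hξ _ _ _)]
      exact le_top
    obtain ⟨hk'p, A', hA', hEq'⟩ := T.GammaW_attained _ ξ u k' l' hT'
    obtain ⟨hk''p, A'', hA'', hEq''⟩ := T.GammaW_attained _ ξ u k'' l'' hT''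
    obtain ⟨A, hA, hgam⟩ := T.combine hud ξ hk'p hk''p hA' hA''
    have hkk : k' + k'' - 1 = k := by omega
    rw [hEq', hEq'', ← hkk, ← hlsum]
    refine le_trans (T.GammaW_le Finset.univ ξ u (by omega) (l' + l'') hA) ?_
    rw [hgam]
    push_cast
    exact le_refl _
  · refine le_sInf fun x hx => ?_
    obtain ⟨hpos, A, hA, rfl⟩ := hx
    obtain ⟨k', k'', l', l'', hk'p, hk''p, A', A'', hksum, hlsum, hA', hA'', hgam⟩ :=
      T.split_witness hud ξ hpos hA
    refine le_trans (sInf_le ⟨k', k'', l', l'', hk'p, hk''p, hksum, hlsum, rfl⟩) ?_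
    have h1 := T.GammaW_le (Finset.univ \ T.desc ud) ξ u hk'p l' hA'
    have h2 := T.GammaW_le ((Finset.univ \ T.desc u) ∪ insert u (T.desc ud)) ξ u hk''p l'' hA''
    refine le_trans (add_le_add h1 h2) ?_
    rw [hgam]
    push_cast
    exact le_refl _
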